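/- With β ∈ M₀¹ ⊖ S₁ having symmetry sign ε ∈ {±1} as above, for n, m ≥ 0 the inner product ⟨χ_n β χ_m, β⟩ equals: (−ε)^{(n+m)/2}·ε·‖β‖₂² if n+m > 2 and |n−m| = 2; 2(−ε)ⁿ‖β‖₂² if n+m > 2 and n = m; −‖β‖₂² if n+m = 2 and (n,m) ≠ (1,1); −ε‖β‖₂² if (n,m) = (1,1); ‖β‖₂² if (n,m) = (0,0); and 0 otherwise. -/

import Mathlib

namespace Stmt14
open FreeGroup

variable {N : ℕ}

abbrev FG (N : ℕ) := FreeGroup (Fin N)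

/-- word length -/
def ln (v : FG N) : ℕ := (FreeGroup.toWord v).length

/-- first letter (as a group element); `1` if `v = 1`. -/
def fl (v : FG N) : FG N := FreeGroup.mk ((FreeGroup.toWord v).take 1)

lemma ln_inv (v : FG N) : ln v⁻¹ = ln v := by
  simp [ln, FreeGroup.toWord_inv, FreeGroup.invRev_length]

lemma ln_eq_zero {v : FG N} : ln v = 0 ↔ v = 1 := by
  simp [ln, List.length_eq_zero_iff, FreeGroup.toWord_eq_nil_iff]

lemma toWord_mk_singleton (x : Fin N × Bool) :
    (FreeGroup.mk [x]).toWord = [x] := by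
  rw [FreeGroup.toWord_mk, FreeGroup.reduce_singleton]

lemma exists_letter {b : FG N} (hb : ln b = 1) :
    ∃ x, b = FreeGroup.mk [x] ∧ b.toWord = [x] := by
  obtain ⟨x, hx⟩ := List.length_eq_one_iff.mp hb
  exact ⟨x, by rw [← hx, FreeGroup.mk_toWord], hx⟩

lemma mul_letter_toWord (x : Fin N × Bool) (v : FG N) :
    (FreeGroup.mk [x] * v).toWord =
      (match v.toWord with
        | [] => [x]
        | hd :: tl => if x.1 = hd.1 ∧ x.2 = !hd.2 then tl else x :: hd :: tl) := by
  conv_lhs => rw [← FreeGroup.mk_toWord (x := v)]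
  rw [FreeGroup.mul_mk, FreeGroup.toWord_mk]
  show FreeGroup.reduce (x :: v.toWord) = _
  rw [FreeGroup.reduce.cons, FreeGroup.reduce_toWord]
  cases h : v.toWord with
  | nil => rfl
  | cons hd tl => rfl

lemma fl_one : fl (1 : FG N) = 1 := by
  simp [fl, FreeGroup.toWord_one, FreeGroup.one_eq_mk]

lemma fl_cons {v : FG N} {hd tl} (h : v.toWord = hd :: tl) :
    fl v = FreeGroup.mk [hd] := by simp [fl, h]

lemma fl_ln_one {v : FG N} (h : v ≠ 1) : ln (fl v) = 1 := by
  cases hv : v.toWord with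
  | nil => exact absurd (FreeGroup.toWord_eq_nil_iff.mp hv) h
  | cons hd tl => rw [fl_cons hv]; simp [ln, toWord_mk_singleton]

lemma fl_of_ln_one {v : FG N} (h : ln v = 1) : fl v = v := by
  obtain ⟨x, hx, hw⟩ := exists_letter h
  rw [fl, hw]; simpa using hx.symm

/-- Left multiplication by a letter changes length by exactly one. -/
lemma ln_letter_mul {b : FG N} (hb : ln b = 1) (v : FG N) :
    ln (b * v) = ln v + 1 ∨ ln (b * v) + 1 = ln v := by
  obtain ⟨x, hx, -⟩ := exists_letter hb
  subst hx
  rw [ln, mul_letter_toWord]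
  cases h : v.toWord with
  | nil => left; simp [ln, h]
  | cons hd tl =>
    by_cases hc : x.1 = hd.1 ∧ x.2 = !hd.2
    · right; simp [hc, ln, h]
    · left; simp [hc, ln, h]

/-- key characterization: a letter `b` cancels at the left of `u` iff `b` is the
first letter of `u`. -/
lemma cancel_iff_fl {b : FG N} (hb : ln b = 1) (u : FG N) :
    ln (b⁻¹ * u) + 1 = ln u ↔ b = fl u := by
  obtain ⟨x, hx, hxw⟩ := exists_letter hb
  have hbinv : b⁻¹ = FreeGroup.mk [(x.1, !x.2)] := by
    rw [hx, FreeGroup.inv_mk]; rfl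
  rw [hbinv]
  cases h : u.toWord with
  | nil =>
    have hu : u = 1 := FreeGroup.toWord_eq_nil_iff.mp h
    subst hu
    constructor
    · intro hh; exfalso; simp [ln, mul_one, mul_letter_toWord, FreeGroup.toWord_one] at hh
    · intro hh; exfalso; rw [fl_one, hx] at hh
      have := congrArg FreeGroup.toWord hh
      simp [toWord_mk_singleton, FreeGroup.toWord_one] at this
  | cons hd tl =>
    rw [fl_cons h, hx]
    constructor
    · intro hh
      rw [ln, mul_letter_toWord, h] at hh
      by_cases hc : (x.1, !x.2).1 = hd.1 ∧ (x.1, !x.2).2 = !hd.2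
      · obtain ⟨h1, h2⟩ := hc
        simp only at h1 h2
        have : x = hd := by
          cases x; cases hd; simp_all [Bool.not_not]
        rw [this]
      · exfalso
        simp only [hc, if_false] at hh
        simp [ln, h] at hh
        omega
    · intro hh
      have hxhd : x = hd := by
        have := congrArg FreeGroup.toWord hh
        simpa [toWord_mk_singleton] using this
      subst hxhd
      rw [ln, mul_letter_toWord, h]
      simp [ln, h]


lemma ln_mul_letter {y : FG N} (hy : ln y = 1) (v : FG N) :
    ln (v * y) = ln v + 1 ∨ ln (v * y) + 1 = ln v := by
  have h1 : ln (y⁻¹) = 1 := by rw [ln_inv]; exact hy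
  have := ln_letter_mul h1 v⁻¹
  rwa [← mul_inv_rev, ln_inv, ln_inv] at this

lemma cancel_right_iff {y : FG N} (hy : ln y = 1) (v : FG N) :
    ln (v * y) + 1 = ln v ↔ y = fl v⁻¹ := by
  have := cancel_iff_fl hy v⁻¹
  rwa [← mul_inv_rev, ln_inv, ln_inv] at this

lemma ln_letter_mul_le {b : FG N} (hb : ln b = 1) (v : FG N) :
    ln (b * v) ≤ ln v + 1 := by
  rcases ln_letter_mul hb v with h | h <;> omega

lemma fl_mul_letter {y v : FG N} (hy : ln y = 1) (hv : v ≠ 1)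
    (h : ln (v * y) = ln v + 1) : fl (v * y) = fl v := by
  have hf1 : ln (fl v) = 1 := fl_ln_one hv
  have hcan : ln ((fl v)⁻¹ * v) + 1 = ln v := (cancel_iff_fl hf1 v).mpr rfl
  have key : ln ((fl v)⁻¹ * (v * y)) + 1 = ln (v * y) := by
    rw [← mul_assoc]
    rcases ln_mul_letter hy ((fl v)⁻¹ * v) with h2 | h2
    · omega
    · exfalso
      have hle : ln (v * y) ≤ ln ((fl v)⁻¹ * v * y) + 1 := by
        have := ln_letter_mul_le hf1 ((fl v)⁻¹ * v * y)
        have heq : fl v * ((fl v)⁻¹ * v * y) = v * y := by group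
        rwa [heq] at this
      omega
  exact ((cancel_iff_fl hf1 (v * y)).mp key).symm




lemma mul_apply_left {G : Type*} [Group G] [DecidableEq G]
    (f g : MonoidAlgebra ℂ G) (x : G) :
    (f * g).coeff x = ∑ a ∈ f.coeff.support, f.coeff a * g.coeff (a⁻¹ * x) := by
  rw [MonoidAlgebra.mul_apply, Finsupp.sum]
  refine Finset.sum_congr rfl fun a _ => ?_
  rw [Finsupp.sum, Finset.sum_eq_single (a⁻¹ * x)]
  · simp
  · intro b _ hne
    have : a * b ≠ x := fun hc => hne (by rw [← hc]; group)
    simp [this]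
  · intro hnot
    have hg : g.coeff (a⁻¹ * x) = 0 := Finsupp.notMem_support_iff.mp hnot
    simp [hg]

lemma mul_apply_right {G : Type*} [Group G] [DecidableEq G]
    (f g : MonoidAlgebra ℂ G) (x : G) :
    (f * g).coeff x = ∑ b ∈ g.coeff.support, f.coeff (x * b⁻¹) * g.coeff b := by
  rw [MonoidAlgebra.mul_apply, Finsupp.sum]
  have : ∀ a ∈ f.coeff.support, (Finsupp.sum g.coeff fun a₂ b₂ => if a * a₂ = x then f.coeff a * b₂ else 0)
      = ∑ b ∈ g.coeff.support, if a * b = x then f.coeff a * g.coeff b else 0 := fun a _ => rfl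
  rw [Finset.sum_congr rfl this, Finset.sum_comm]
  refine Finset.sum_congr rfl fun b _ => ?_
  rw [Finset.sum_eq_single (x * b⁻¹)]
  · simp
  · intro a _ hne
    have : a * b ≠ x := fun hc => hne (by rw [← hc]; group)
    simp [this]
  · intro hnot
    have hf : f.coeff (x * b⁻¹) = 0 := Finsupp.notMem_support_iff.mp hnot
    simp [hf]




section Main

variable {N : ℕ} {chi : ℕ → MonoidAlgebra ℂ (FG N)}
  {β : MonoidAlgebra ℂ (FG N)} {ε : ℝ}

lemma mem_supp_chi (hchi : ∀ n, ∀ w : FG N,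
      (chi n).coeff w = if (FreeGroup.toWord w).length = n then 1 else 0)
    (k : ℕ) (v : FG N) : v ∈ (chi k).coeff.support ↔ ln v = k := by
  rw [Finsupp.mem_support_iff, hchi]
  by_cases h : (FreeGroup.toWord v).length = k <;> simp [h, ln]

lemma ln_of_mem_supp_beta (hβlen : ∀ w : FG N, (FreeGroup.toWord w).length ≠ 1 → β.coeff w = 0)
    {b : FG N} (hb : b ∈ β.coeff.support) : ln b = 1 := by
  by_contra h
  exact Finsupp.mem_support_iff.mp hb (hβlen b h)

lemma sum_supp_beta (hchi : ∀ n, ∀ w : FG N,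
      (chi n).coeff w = if (FreeGroup.toWord w).length = n then 1 else 0)
    (hβlen : ∀ w : FG N, (FreeGroup.toWord w).length ≠ 1 → β.coeff w = 0)
    (hβorth : (β.coeff.sum fun w a => a * (starRingEnd ℂ) ((chi 1).coeff w)) = 0) :
    ∑ b ∈ β.coeff.support, β.coeff b = 0 := by
  rw [← hβorth, Finsupp.sum]
  refine Finset.sum_congr rfl fun b hb => ?_
  have h1 : ln b = 1 := ln_of_mem_supp_beta hβlen hb
  rw [hchi, if_pos (show (FreeGroup.toWord b).length = 1 from h1)]
  simp

lemma Qval (hchi : ∀ n, ∀ w : FG N,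
      (chi n).coeff w = if (FreeGroup.toWord w).length = n then 1 else 0)
    (hβlen : ∀ w : FG N, (FreeGroup.toWord w).length ≠ 1 → β.coeff w = 0)
    (hβorth : (β.coeff.sum fun w a => a * (starRingEnd ℂ) ((chi 1).coeff w)) = 0)
    (m : ℕ) (u : FG N) :
    (β * chi m).coeff u = (if ln u = m + 1 then β.coeff (fl u) else 0)
      - (if ln u + 1 = m then β.coeff (fl u) else 0) := by
  rw [mul_apply_left]
  have hterm : ∀ b ∈ β.coeff.support, β.coeff b * (chi m).coeff (b⁻¹ * u)
      = if ln (b⁻¹ * u) = m then β.coeff b else 0 := by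
    intro b hb
    rw [hchi]
    by_cases h : (FreeGroup.toWord (b⁻¹ * u)).length = m
    · simp [h, ln]
    · simp [h, ln]
  rw [Finset.sum_congr rfl hterm]
  by_cases h1 : ln u = m + 1
  · have h2 : ¬ (ln u + 1 = m) := by omega
    rw [if_pos h1, if_neg h2, sub_zero]
    have hpt : ∀ b ∈ β.coeff.support, (if ln (b⁻¹ * u) = m then β.coeff b else 0)
        = if b = fl u then β.coeff b else 0 := by
      intro b hb
      have hb1 : ln b = 1 := ln_of_mem_supp_beta hβlen hb
      by_cases hc : b = fl u
      · have : ln (b⁻¹ * u) + 1 = ln u := (cancel_iff_fl hb1 u).mpr hc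
        rw [if_pos hc, if_pos (by omega)]
      · rw [if_neg hc]
        rcases ln_letter_mul (by rw [ln_inv]; exact hb1) u with hd | hd
        · rw [if_neg (by omega)]
        · exact absurd ((cancel_iff_fl hb1 u).mp (by omega)) hc
    rw [Finset.sum_congr rfl hpt, Finset.sum_ite_eq' β.coeff.support (fl u) (fun b => β.coeff b)]
    by_cases hm : fl u ∈ β.coeff.support
    · rw [if_pos hm]
    · rw [if_neg hm, Finsupp.notMem_support_iff.mp hm]
  · by_cases h2 : ln u + 1 = m
    · rw [if_neg h1, if_pos h2, zero_sub]
      have hpt : ∀ b ∈ β.coeff.support, (if ln (b⁻¹ * u) = m then β.coeff b else 0)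
          = β.coeff b - (if b = fl u then β.coeff b else 0) := by
        intro b hb
        have hb1 : ln b = 1 := ln_of_mem_supp_beta hβlen hb
        by_cases hc : b = fl u
        · have : ln (b⁻¹ * u) + 1 = ln u := (cancel_iff_fl hb1 u).mpr hc
          rw [if_pos hc, if_neg (by omega), sub_self]
        · rw [if_neg hc, sub_zero]
          rcases ln_letter_mul (by rw [ln_inv]; exact hb1) u with hd | hd
          · rw [if_pos (by omega)]
          · exact absurd ((cancel_iff_fl hb1 u).mp (by omega)) hc
      rw [Finset.sum_congr rfl hpt, Finset.sum_sub_distrib,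
        sum_supp_beta hchi hβlen hβorth,
        Finset.sum_ite_eq' β.coeff.support (fl u) (fun b => β.coeff b), zero_sub]
      by_cases hm : fl u ∈ β.coeff.support
      · rw [if_pos hm]
      · rw [if_neg hm, Finsupp.notMem_support_iff.mp hm]
    · rw [if_neg h1, if_neg h2, sub_zero]
      refine Finset.sum_eq_zero fun b hb => ?_
      have hb1 : ln b = 1 := ln_of_mem_supp_beta hβlen hb
      rcases ln_letter_mul (by rw [ln_inv]; exact hb1) u with hd | hd
      · rw [if_neg (by omega)]
      · rw [if_neg (by omega)]

/-- `A k = ∑_{|v|=k} β(first letter of v)` -/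
noncomputable def Asum (chi : ℕ → MonoidAlgebra ℂ (FG N)) (β : MonoidAlgebra ℂ (FG N)) (k : ℕ) : ℂ :=
  ∑ v ∈ (chi k).coeff.support, β.coeff (fl v)

/-- `Z k w = ∑_{|v|=k, last letter of v = w} β(first letter of v)` -/
noncomputable def Zsum (chi : ℕ → MonoidAlgebra ℂ (FG N)) (β : MonoidAlgebra ℂ (FG N)) (k : ℕ)
    (w : FG N) : ℂ :=
  ∑ v ∈ (chi k).coeff.support, if ln (w * v⁻¹) + 1 = k then β.coeff (fl v) else 0

lemma Asum_one (hchi : ∀ n, ∀ w : FG N,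
      (chi n).coeff w = if (FreeGroup.toWord w).length = n then 1 else 0)
    (hβlen : ∀ w : FG N, (FreeGroup.toWord w).length ≠ 1 → β.coeff w = 0)
    (hβorth : (β.coeff.sum fun w a => a * (starRingEnd ℂ) ((chi 1).coeff w)) = 0) :
    Asum chi β 1 = 0 := by
  rw [Asum, ← sum_supp_beta hchi hβlen hβorth]
  rw [Finset.sum_congr rfl (fun v hv => by
    rw [fl_of_ln_one ((mem_supp_chi hchi 1 v).mp hv)])]
  symm
  refine Finset.sum_subset (fun b hb => ?_) (fun v _ hv => Finsupp.notMem_support_iff.mp hv)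
  exact (mem_supp_chi hchi 1 b).mpr (ln_of_mem_supp_beta hβlen hb)

lemma Asum_succ (hchi : ∀ n, ∀ w : FG N,
      (chi n).coeff w = if (FreeGroup.toWord w).length = n then 1 else 0)
    (k : ℕ) (hk : 1 ≤ k) :
    Asum chi β (k + 1) = ((chi 1).coeff.support.card - 1 : ℂ) * Asum chi β k := by
  have hbij : Asum chi β (k+1) = ∑ p ∈ ((chi k).coeff.support ×ˢ (chi 1).coeff.support).filter
      (fun p => ln (p.1 * p.2) = k + 1), β.coeff (fl p.1) := by
    rw [Asum]
    refine Finset.sum_nbij' (fun v => (v * fl v⁻¹, (fl v⁻¹)⁻¹)) (fun p => p.1 * p.2)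
      ?_ ?_ ?_ ?_ ?_
    · intro v hv
      have hlv : ln v = k + 1 := (mem_supp_chi hchi _ v).mp hv
      have hne : v⁻¹ ≠ 1 := by
        intro h; rw [inv_eq_one.mp h] at hlv; rw [ln_eq_zero.mpr rfl] at hlv; omega
      have hfl : ln (fl v⁻¹) = 1 := fl_ln_one hne
      have hcan : ln (v * fl v⁻¹) + 1 = ln v := (cancel_right_iff hfl v).mpr rfl
      simp only [Finset.mem_filter, Finset.mem_product]
      refine ⟨⟨(mem_supp_chi hchi _ _).mpr (by omega),
        (mem_supp_chi hchi _ _).mpr (by rw [ln_inv]; exact hfl)⟩, ?_⟩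
      have : v * fl v⁻¹ * (fl v⁻¹)⁻¹ = v := by group
      rw [this]; exact hlv
    · intro p hp
      simp only [Finset.mem_filter, Finset.mem_product] at hp
      exact (mem_supp_chi hchi _ _).mpr hp.2
    · intro v _; group
    · intro p hp
      simp only [Finset.mem_filter, Finset.mem_product] at hp
      obtain ⟨⟨h1, h2⟩, h3⟩ := hp
      have hl1 : ln p.1 = k := (mem_supp_chi hchi _ _).mp h1
      have hl2 : ln p.2 = 1 := (mem_supp_chi hchi _ _).mp h2
      have hfl : fl ((p.1 * p.2)⁻¹) = p.2⁻¹ := by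
        symm
        refine (cancel_iff_fl (by rw [ln_inv]; exact hl2) _).mp ?_
        have he : (p.2⁻¹)⁻¹ * (p.1 * p.2)⁻¹ = p.1⁻¹ := by group
        rw [he, ln_inv, ln_inv, hl1, h3]
      ext
      · show p.1 * p.2 * fl ((p.1 * p.2)⁻¹) = p.1
        rw [hfl]; group
      · show (fl ((p.1 * p.2)⁻¹))⁻¹ = p.2
        rw [hfl]; group
    · intro v hv
      have hlv : ln v = k + 1 := (mem_supp_chi hchi _ v).mp hv
      have hne : v⁻¹ ≠ 1 := by
        intro h; rw [inv_eq_one.mp h] at hlv; rw [ln_eq_zero.mpr rfl] at hlv; omega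
      have hfl : ln (fl v⁻¹) = 1 := fl_ln_one hne
      have hcan : ln (v * fl v⁻¹) + 1 = ln v := (cancel_right_iff hfl v).mpr rfl
      have hne2 : v * fl v⁻¹ ≠ 1 := by
        intro h
        rw [h] at hcan; rw [ln_eq_zero.mpr rfl] at hcan; omega
      show β.coeff (fl v) = β.coeff (fl (v * fl v⁻¹))
      have : fl ((v * fl v⁻¹) * (fl v⁻¹)⁻¹) = fl (v * fl v⁻¹) := by
        refine fl_mul_letter (by rw [ln_inv]; exact hfl) hne2 ?_
        have he : v * fl v⁻¹ * (fl v⁻¹)⁻¹ = v := by group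
        rw [he]; omega
      have he : v * fl v⁻¹ * (fl v⁻¹)⁻¹ = v := by group
      rw [he] at this
      rw [this]
  rw [hbij, Finset.sum_filter, Finset.sum_product]
  have hrow : ∀ v ∈ (chi k).coeff.support,
      (∑ y ∈ (chi 1).coeff.support, if ln (v * y) = k + 1 then β.coeff (fl v) else 0)
      = ((chi 1).coeff.support.card - 1 : ℂ) * β.coeff (fl v) := by
    intro v hv
    have hlv : ln v = k := (mem_supp_chi hchi _ _).mp hv
    have hvne : v ≠ 1 := by
      intro h; rw [h, ln_eq_zero.mpr rfl] at hlv; omega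
    have hvne' : v⁻¹ ≠ 1 := by simpa using hvne
    have hpt : ∀ y ∈ (chi 1).coeff.support, (if ln (v * y) = k + 1 then β.coeff (fl v) else 0)
        = β.coeff (fl v) - (if y = fl v⁻¹ then β.coeff (fl v) else 0) := by
      intro y hy
      have hy1 : ln y = 1 := (mem_supp_chi hchi _ _).mp hy
      by_cases hc : y = fl v⁻¹
      · have : ln (v * y) + 1 = ln v := (cancel_right_iff hy1 v).mpr hc
        rw [if_pos hc, if_neg (by omega), sub_self]
      · rcases ln_mul_letter hy1 v with hd | hd
        · rw [if_pos (by omega), if_neg hc, sub_zero]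
        · exact absurd ((cancel_right_iff hy1 v).mp (by omega)) hc
    rw [Finset.sum_congr rfl hpt, Finset.sum_sub_distrib, Finset.sum_const,
      Finset.sum_ite_eq' _ (fl v⁻¹) (fun _ => β.coeff (fl v)),
      if_pos ((mem_supp_chi hchi 1 _).mpr (fl_ln_one hvne')), nsmul_eq_mul]
    ring
  rw [Finset.sum_congr rfl hrow, Asum, Finset.mul_sum]

lemma Asum_zero (hchi : ∀ n, ∀ w : FG N,
      (chi n).coeff w = if (FreeGroup.toWord w).length = n then 1 else 0)
    (hβlen : ∀ w : FG N, (FreeGroup.toWord w).length ≠ 1 → β.coeff w = 0)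
    (hβorth : (β.coeff.sum fun w a => a * (starRingEnd ℂ) ((chi 1).coeff w)) = 0)
    (k : ℕ) (hk : 1 ≤ k) : Asum chi β k = 0 := by
  induction k with
  | zero => omega
  | succ k ih =>
    by_cases h : k = 0
    · subst h; exact Asum_one hchi hβlen hβorth
    · have hk1 : 1 ≤ k := by omega
      rw [Asum_succ hchi k hk1, ih hk1, mul_zero]

lemma Zsum_one (hchi : ∀ n, ∀ w : FG N,
      (chi n).coeff w = if (FreeGroup.toWord w).length = n then 1 else 0)
    {w : FG N} (hw : ln w = 1) : Zsum chi β 1 w = β.coeff w := by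
  rw [Zsum]
  have hpt : ∀ v ∈ (chi 1).coeff.support,
      (if ln (w * v⁻¹) + 1 = 1 then β.coeff (fl v) else 0) = if v = w then β.coeff v else 0 := by
    intro v hv
    have hv1 : ln v = 1 := (mem_supp_chi hchi _ _).mp hv
    by_cases hc : v = w
    · subst hc
      rw [if_pos rfl, if_pos (by rw [mul_inv_cancel, ln_eq_zero.mpr rfl])]
      rw [fl_of_ln_one hv1]
    · rw [if_neg hc, if_neg ?_]
      intro h
      have : w * v⁻¹ = 1 := ln_eq_zero.mp (by omega)
      exact hc (by rw [← mul_inv_eq_one.mp this])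
  rw [Finset.sum_congr rfl hpt, Finset.sum_ite_eq' _ w (fun v => β.coeff v),
    if_pos ((mem_supp_chi hchi 1 w).mpr hw)]

lemma Zsum_succ (hchi : ∀ n, ∀ w : FG N,
      (chi n).coeff w = if (FreeGroup.toWord w).length = n then 1 else 0)
    (k : ℕ) (hk : 1 ≤ k) {w : FG N} (hw : ln w = 1) :
    Zsum chi β (k + 1) w = Asum chi β k - Zsum chi β k w⁻¹ := by
  have hmi : ∀ a b : FG N, ln (a * b) = ln (b⁻¹ * a⁻¹) := by
    intro a b; rw [← mul_inv_rev, ln_inv]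
  have hbij : Zsum chi β (k+1) w
      = ∑ v ∈ (chi k).coeff.support, if ln (v * w) = k + 1 then β.coeff (fl v) else 0 := by
    rw [Zsum, Finset.sum_ite, Finset.sum_const, Finset.sum_ite, Finset.sum_const]
    simp only [smul_zero, add_zero]
    refine Finset.sum_nbij' (fun v => v * w⁻¹) (fun v => v * w) ?_ ?_ ?_ ?_ ?_
    · intro v hv
      simp only [Finset.mem_filter] at hv ⊢
      obtain ⟨h1, h2⟩ := hv
      have hlv : ln v = k + 1 := (mem_supp_chi hchi _ _).mp h1
      have hvw : ln (v * w⁻¹) = k := by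
        rw [hmi] at h2
        simp only [inv_inv] at h2
        omega
      refine ⟨(mem_supp_chi hchi _ _).mpr hvw, ?_⟩
      have he : v * w⁻¹ * w = v := by group
      rw [he, hlv]
    · intro v hv
      simp only [Finset.mem_filter] at hv ⊢
      obtain ⟨h1, h2⟩ := hv
      have hlv : ln v = k := (mem_supp_chi hchi _ _).mp h1
      refine ⟨(mem_supp_chi hchi _ _).mpr h2, ?_⟩
      have he : w * (v * w)⁻¹ = v⁻¹ := by group
      rw [he, ln_inv, hlv]
    · intro v _; group
    · intro v _; group
    · intro v hv
      simp only [Finset.mem_filter] at hv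
      obtain ⟨h1, h2⟩ := hv
      have hlv : ln v = k + 1 := (mem_supp_chi hchi _ _).mp h1
      have hvw : ln (v * w⁻¹) = k := by
        rw [hmi] at h2
        simp only [inv_inv] at h2
        omega
      have hne : v * w⁻¹ ≠ 1 := by
        intro h; rw [h, ln_eq_zero.mpr rfl] at hvw; omega
      have he : v * w⁻¹ * w = v := by group
      have := fl_mul_letter hw hne (by rw [he]; omega)
      rw [he] at this
      rw [← this]
  rw [hbij]
  have hpt : ∀ v ∈ (chi k).coeff.support, (if ln (v * w) = k + 1 then β.coeff (fl v) else 0)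
      = β.coeff (fl v) - (if ln (w⁻¹ * v⁻¹) + 1 = k then β.coeff (fl v) else 0) := by
    intro v hv
    have hlv : ln v = k := (mem_supp_chi hchi _ _).mp hv
    rcases ln_mul_letter hw v with hd | hd
    · rw [if_pos (by omega), if_neg (by rw [← hmi]; omega), sub_zero]
    · rw [if_neg (by omega), if_pos (by rw [← hmi]; omega), sub_self]
  rw [Finset.sum_congr rfl hpt, Finset.sum_sub_distrib]
  rfl

lemma Zsum_val (hchi : ∀ n, ∀ w : FG N,
      (chi n).coeff w = if (FreeGroup.toWord w).length = n then 1 else 0)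
    (hβlen : ∀ w : FG N, (FreeGroup.toWord w).length ≠ 1 → β.coeff w = 0)
    (hβorth : (β.coeff.sum fun w a => a * (starRingEnd ℂ) ((chi 1).coeff w)) = 0)
    (hβsym : ∀ w : FG N, β.coeff w = (ε : ℂ) * β.coeff w⁻¹)
    (hε : ε = 1 ∨ ε = -1)
    (k : ℕ) (hk : 1 ≤ k) : ∀ w : FG N, ln w = 1 →
    Zsum chi β k w = (-(ε:ℂ)) ^ (k - 1) * β.coeff w := by
  induction k with
  | zero => omega
  | succ k ih =>
    intro w hw
    by_cases h : k = 0
    · subst h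
      rw [Zsum_one hchi hw]
      simp
    · have hk1 : 1 ≤ k := by omega
      have hw1 : ln w⁻¹ = 1 := by rw [ln_inv]; exact hw
      rw [Zsum_succ hchi k hk1 hw, Asum_zero hchi hβlen hβorth k hk1,
        ih hk1 w⁻¹ hw1, zero_sub]
      have hsymm : β.coeff w⁻¹ = (ε:ℂ) * β.coeff w := by
        have h2 := hβsym w⁻¹
        rw [inv_inv] at h2
        exact h2
      rw [hsymm]
      have hε2 : (ε:ℂ) * ε = 1 := by
        rcases hε with h | h <;> subst h <;> norm_num
      have hkk : k + 1 - 1 = (k - 1) + 1 := by omega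
      rw [hkk, pow_succ]
      ring

lemma Ysum (hchi : ∀ n, ∀ w : FG N,
      (chi n).coeff w = if (FreeGroup.toWord w).length = n then 1 else 0)
    (hβlen : ∀ w : FG N, (FreeGroup.toWord w).length ≠ 1 → β.coeff w = 0)
    (hβorth : (β.coeff.sum fun w a => a * (starRingEnd ℂ) ((chi 1).coeff w)) = 0)
    (n k : ℕ) (hk : 1 ≤ k) {w : FG N} (hw : ln w = 1) :
    (∑ v ∈ (chi k).coeff.support, if ln (w * v⁻¹) = n then β.coeff (fl v) else 0)
      = (if n + 1 = k then 1 else if n = k + 1 then -1 else 0) * Zsum chi β k w := by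
  by_cases h1 : n + 1 = k
  · rw [if_pos h1, one_mul, Zsum]
    refine Finset.sum_congr rfl fun v hv => ?_
    exact if_congr (by omega) rfl rfl
  · rw [if_neg h1]
    by_cases h2 : n = k + 1
    · rw [if_pos h2, neg_one_mul]
      have hpt : ∀ v ∈ (chi k).coeff.support, (if ln (w * v⁻¹) = n then β.coeff (fl v) else 0)
          = β.coeff (fl v) - (if ln (w * v⁻¹) + 1 = k then β.coeff (fl v) else 0) := by
        intro v hv
        have hlv : ln v⁻¹ = k := by
          rw [ln_inv]; exact (mem_supp_chi hchi _ _).mp hv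
        rcases ln_letter_mul hw v⁻¹ with hd | hd
        · rw [if_pos (by omega), if_neg (by omega), sub_zero]
        · rw [if_neg (by omega), if_pos (by omega), sub_self]
      rw [Finset.sum_congr rfl hpt, Finset.sum_sub_distrib,
        show (∑ v ∈ (chi k).coeff.support, β.coeff (fl v)) = Asum chi β k from rfl,
        Asum_zero hchi hβlen hβorth k hk, zero_sub]
      rfl
    · rw [if_neg h2, zero_mul]
      refine Finset.sum_eq_zero fun v hv => ?_
      have hlv : ln v⁻¹ = k := by
        rw [ln_inv]; exact (mem_supp_chi hchi _ _).mp hv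
      rcases ln_letter_mul hw v⁻¹ with hd | hd
      · rw [if_neg (by omega)]
      · rw [if_neg (by omega)]

noncomputable def Cval (ε : ℝ) (n m : ℕ) : ℂ :=
  (if n + 1 = m + 1 then 1 else if n = m + 2 then -1 else 0) * (-(ε:ℂ)) ^ m
  - (if 2 ≤ m then
      (if n + 1 = m - 1 then 1 else if n = m then -1 else 0) * (-(ε:ℂ)) ^ (m - 2) else 0)

lemma Pval (hchi : ∀ n, ∀ w : FG N,
      (chi n).coeff w = if (FreeGroup.toWord w).length = n then 1 else 0)
    (hβlen : ∀ w : FG N, (FreeGroup.toWord w).length ≠ 1 → β.coeff w = 0)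
    (hβorth : (β.coeff.sum fun w a => a * (starRingEnd ℂ) ((chi 1).coeff w)) = 0)
    (hβsym : ∀ w : FG N, β.coeff w = (ε : ℂ) * β.coeff w⁻¹)
    (hε : ε = 1 ∨ ε = -1)
    (n m : ℕ) {w : FG N} (hw : ln w = 1) :
    (chi n * β * chi m).coeff w = Cval ε n m * β.coeff w := by
  rw [mul_assoc, mul_apply_right]
  have hsub : (β * chi m).coeff.support ⊆ (chi (m+1)).coeff.support ∪ (chi (m-1)).coeff.support := by
    intro v hv
    have hne := Finsupp.mem_support_iff.mp hv
    rw [Qval hchi hβlen hβorth m v] at hne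
    by_cases h1 : ln v = m + 1
    · exact Finset.mem_union_left _ ((mem_supp_chi hchi _ _).mpr h1)
    · by_cases h2 : ln v + 1 = m
      · exact Finset.mem_union_right _ ((mem_supp_chi hchi _ _).mpr (by omega))
      · simp [h1, h2] at hne
  rw [Finset.sum_subset hsub (fun v _ hv => by
    rw [Finsupp.notMem_support_iff.mp hv, mul_zero])]
  have hdisj : Disjoint (chi (m+1)).coeff.support (chi (m-1)).coeff.support := by
    rw [Finset.disjoint_left]
    intro a h1 h2
    have e1 : ln a = m + 1 := (mem_supp_chi hchi _ _).mp h1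
    have e2 : ln a = m - 1 := (mem_supp_chi hchi _ _).mp h2
    omega
  rw [Finset.sum_union hdisj]
  have hterm1 : ∀ v ∈ (chi (m+1)).coeff.support,
      (chi n).coeff (w * v⁻¹) * (β * chi m).coeff v = if ln (w * v⁻¹) = n then β.coeff (fl v) else 0 := by
    intro v hv
    have hlv : ln v = m + 1 := (mem_supp_chi hchi _ _).mp hv
    rw [Qval hchi hβlen hβorth m v, if_pos hlv, if_neg (by omega), sub_zero, hchi]
    by_cases h : ln (w * v⁻¹) = n
    · rw [if_pos h, if_pos (show (FreeGroup.toWord (w * v⁻¹)).length = n from h), one_mul]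
    · rw [if_neg h, if_neg (show ¬ (FreeGroup.toWord (w * v⁻¹)).length = n from h), zero_mul]
  rw [Finset.sum_congr rfl hterm1,
    Ysum hchi hβlen hβorth n (m+1) (by omega) hw,
    Zsum_val hchi hβlen hβorth hβsym hε (m+1) (by omega) w hw]
  by_cases hm : 2 ≤ m
  · have hterm2 : ∀ v ∈ (chi (m-1)).coeff.support,
        (chi n).coeff (w * v⁻¹) * (β * chi m).coeff v
          = -(if ln (w * v⁻¹) = n then β.coeff (fl v) else 0) := by
      intro v hv
      have hlv : ln v = m - 1 := (mem_supp_chi hchi _ _).mp hv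
      rw [Qval hchi hβlen hβorth m v, if_neg (by omega), if_pos (by omega), zero_sub, hchi]
      by_cases h : ln (w * v⁻¹) = n
      · rw [if_pos h, if_pos (show (FreeGroup.toWord (w * v⁻¹)).length = n from h), one_mul]
      · rw [if_neg h, if_neg (show ¬ (FreeGroup.toWord (w * v⁻¹)).length = n from h),
          zero_mul, neg_zero]
    rw [Finset.sum_congr rfl hterm2, Finset.sum_neg_distrib,
      Ysum hchi hβlen hβorth n (m-1) (by omega) hw,
      Zsum_val hchi hβlen hβorth hβsym hε (m-1) (by omega) w hw, Cval, if_pos hm]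
    simp only [Nat.add_sub_cancel,
      show (n = m + 1 + 1) ↔ (n = m + 2) from by omega,
      show (n = m - 1 + 1) ↔ (n = m) from by omega,
      show (m - 1 - 1) = m - 2 from by omega]
    ring
  · have hterm2 : ∀ v ∈ (chi (m-1)).coeff.support,
        (chi n).coeff (w * v⁻¹) * (β * chi m).coeff v = 0 := by
      intro v hv
      have hlv : ln v = m - 1 := (mem_supp_chi hchi _ _).mp hv
      have hv0 : ln v = 0 := by omega
      have hv1 : v = 1 := ln_eq_zero.mp hv0
      rw [Qval hchi hβlen hβorth m v]
      have hβ1 : β.coeff (fl v) = 0 := by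
        rw [hv1, fl_one]
        exact hβlen 1 (by rw [FreeGroup.toWord_one]; simp)
      rw [hβ1]
      simp
    rw [Finset.sum_congr rfl hterm2, Finset.sum_const_zero, add_zero, Cval,
      if_neg hm, sub_zero]
    simp only [Nat.add_sub_cancel, show (n = m + 1 + 1) ↔ (n = m + 2) from by omega]
    ring

lemma Cval_eq (hε : ε = 1 ∨ ε = -1) (n m : ℕ) :
    Cval ε n m =
      (if (n, m) = (0, 0) then 1
        else if (n, m) = (1, 1) then -(ε : ℂ)
        else if n + m = 2 then -1
        else if n + m > 2 ∧ n = m then 2 * (-(ε : ℂ)) ^ n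
        else if n + m > 2 ∧ |(n : ℤ) - (m : ℤ)| = 2 then (-(ε : ℂ)) ^ ((n + m) / 2) * (ε : ℂ)
        else 0) := by
  have hεε : (ε:ℂ) * ε = 1 := by rcases hε with h | h <;> subst h <;> norm_num
  have hp2 : ∀ j : ℕ, (-(ε:ℂ))^(j+2) = (-(ε:ℂ))^j := by
    intro j
    have h2 : (-(ε:ℂ))^2 = 1 := by rw [neg_sq, sq, hεε]
    rw [pow_add, h2, mul_one]
  have habs : (|(n : ℤ) - (m : ℤ)| = 2) ↔ (n = m + 2 ∨ m = n + 2) := by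
    rw [abs_eq (by norm_num : (0:ℤ) ≤ 2)]
    omega
  simp only [Prod.mk.injEq, habs, gt_iff_lt]
  rw [Cval]
  by_cases h1 : n = m
  · subst h1
    by_cases h0 : n = 0
    · subst h0; norm_num
    · by_cases h2 : n = 1
      · subst h2; norm_num
      · obtain ⟨j, rfl⟩ : ∃ j, n = j + 2 := ⟨n - 2, by omega⟩
        rw [if_pos (show j+2+1 = j+2+1 from rfl),
          if_pos (show 2 ≤ j+2 from by omega),
          if_neg (show ¬(j+2+1 = j+2-1) from by omega),
          if_pos (show j+2 = j+2 from rfl),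
          if_neg (show ¬(j+2 = 0 ∧ j+2 = 0) from by omega),
          if_neg (show ¬(j+2 = 1 ∧ j+2 = 1) from by omega),
          if_neg (show ¬((j+2) + (j+2) = 2) from by omega),
          if_pos (show 2 < (j+2) + (j+2) ∧ j+2 = j+2 from by omega)]
        simp only [Nat.add_sub_cancel]
        rw [hp2 j]
        ring
  · by_cases hD : n = m + 2
    · subst hD
      have hbr : (if 2 ≤ m then
          ((if m+2+1 = m-1 then (1:ℂ) else if m+2 = m then -1 else 0) * (-(ε:ℂ))^(m-2))
          else 0) = 0 := by
        split_ifs <;> first | (exfalso; omega) | ring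
      rw [if_neg (show ¬(m+2+1 = m+1) from by omega),
        if_pos (show m+2 = m+2 from rfl), hbr, sub_zero]
      by_cases hm0 : m = 0
      · subst hm0; norm_num
      · rw [if_neg (show ¬(m+2 = 0 ∧ m = 0) from by omega),
          if_neg (show ¬(m+2 = 1 ∧ m = 1) from by omega),
          if_neg (show ¬((m+2) + m = 2) from by omega),
          if_neg (show ¬(2 < (m+2) + m ∧ m+2 = m) from by omega),
          if_pos (show 2 < (m+2) + m ∧ (m+2 = m+2 ∨ m = (m+2)+2) from by omega),
          show ((m+2) + m)/2 = m + 1 from by omega, pow_succ,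
          show (-(ε:ℂ))^m * (-(ε:ℂ)) * ε = -(((ε:ℂ)*ε) * (-(ε:ℂ))^m) from by ring, hεε]
        ring
    · by_cases hE : m = n + 2
      · subst hE
        rw [if_neg (show ¬(n+1 = n+2+1) from by omega),
          if_neg (show ¬(n = n+2+2) from by omega),
          if_pos (show 2 ≤ n+2 from by omega),
          if_pos (show n+1 = n+2-1 from by omega),
          if_neg (show ¬(n = 0 ∧ n+2 = 0) from by omega),
          if_neg (show ¬(n = 1 ∧ n+2 = 1) from by omega)]
        by_cases hn0 : n = 0
        · subst hn0; norm_num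
        · rw [if_neg (show ¬(n + (n+2) = 2) from by omega),
            if_neg (show ¬(2 < n + (n+2) ∧ n = n+2) from by omega),
            if_pos (show 2 < n + (n+2) ∧ (n = (n+2)+2 ∨ n+2 = n+2) from by omega),
            show (n + (n+2))/2 = n + 1 from by omega]
          simp only [Nat.add_sub_cancel, pow_succ]
          rw [show (-(ε:ℂ))^n * (-(ε:ℂ)) * ε = -(((ε:ℂ)*ε) * (-(ε:ℂ))^n) from by ring, hεε]
          ring
      · have hbr : (if 2 ≤ m then
            ((if n+1 = m-1 then (1:ℂ) else if n = m then -1 else 0) * (-(ε:ℂ))^(m-2))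
            else 0) = 0 := by
          split_ifs <;> first | (exfalso; omega) | ring
        rw [if_neg (show ¬(n+1 = m+1) from by omega),
          if_neg (show ¬(n = m+2) from hD), hbr, sub_zero,
          if_neg (show ¬(n = 0 ∧ m = 0) from by omega),
          if_neg (show ¬(n = 1 ∧ m = 1) from by omega),
          if_neg (show ¬(n + m = 2) from by omega),
          if_neg (show ¬(2 < n + m ∧ n = m) from by omega),
          if_neg (show ¬(2 < n + m ∧ (n = m+2 ∨ m = n+2)) from by omega)]
        ring

end Main
end Stmt14


/-- Lemma 2.2: the values of `⟨χ_n β χ_m, β⟩` for `β` of length one with symmetry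
sign `ε` and orthogonal to `χ₁`. -/
theorem stmt_14 (N : ℕ) (hN : 2 ≤ N)
    (chi : ℕ → MonoidAlgebra ℂ (FreeGroup (Fin N)))
    (hchi : ∀ n, ∀ w : FreeGroup (Fin N),
      (chi n).coeff w = if (FreeGroup.toWord w).length = n then 1 else 0)
    (ε : ℝ) (hε : ε = 1 ∨ ε = -1)
    (β : MonoidAlgebra ℂ (FreeGroup (Fin N)))
    (hβlen : ∀ w : FreeGroup (Fin N), (FreeGroup.toWord w).length ≠ 1 → β.coeff w = 0)
    (hβsym : ∀ w : FreeGroup (Fin N), β.coeff w = (ε : ℂ) * β.coeff w⁻¹)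
    (hβorth : (β.coeff.sum fun w a => a * (starRingEnd ℂ) ((chi 1).coeff w)) = 0)
    (n m : ℕ) :
    ((chi n * β * chi m).coeff.sum fun w a => a * (starRingEnd ℂ) (β.coeff w)) =
      (if (n, m) = (0, 0) then 1
        else if (n, m) = (1, 1) then -(ε : ℂ)
        else if n + m = 2 then -1
        else if n + m > 2 ∧ n = m then 2 * (-(ε : ℂ)) ^ n
        else if n + m > 2 ∧ |(n : ℤ) - (m : ℤ)| = 2 then (-(ε : ℂ)) ^ ((n + m) / 2) * (ε : ℂ)
        else 0) *
      (β.coeff.sum fun w a => a * (starRingEnd ℂ) (β.coeff w)) := by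
  classical
  rw [← Stmt14.Cval_eq hε n m]
  rw [Finsupp.sum, Finsupp.sum]
  have key : ∀ w ∈ (chi n * β * chi m).coeff.support ∪ β.coeff.support,
      (chi n * β * chi m).coeff w * (starRingEnd ℂ) (β.coeff w)
        = Stmt14.Cval ε n m * (β.coeff w * (starRingEnd ℂ) (β.coeff w)) := by
    intro w _
    by_cases h : (FreeGroup.toWord w).length = 1
    · rw [Stmt14.Pval hchi hβlen hβorth hβsym hε n m h]
      ring
    · rw [hβlen w h]
      simp
  calc ∑ w ∈ (chi n * β * chi m).coeff.support, (chi n * β * chi m).coeff w * (starRingEnd ℂ) (β.coeff w)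
      = ∑ w ∈ (chi n * β * chi m).coeff.support ∪ β.coeff.support,
          (chi n * β * chi m).coeff w * (starRingEnd ℂ) (β.coeff w) :=
        Finset.sum_subset Finset.subset_union_left (fun x _ hx => by
          rw [Finsupp.notMem_support_iff.mp hx, zero_mul])
    _ = ∑ w ∈ (chi n * β * chi m).coeff.support ∪ β.coeff.support,
          Stmt14.Cval ε n m * (β.coeff w * (starRingEnd ℂ) (β.coeff w)) := Finset.sum_congr rfl key
    _ = ∑ w ∈ β.coeff.support, Stmt14.Cval ε n m * (β.coeff w * (starRingEnd ℂ) (β.coeff w)) :=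
        (Finset.sum_subset Finset.subset_union_right (fun x _ hx => by
          rw [Finsupp.notMem_support_iff.mp hx]; simp)).symm
    _ = Stmt14.Cval ε n m * ∑ w ∈ β.coeff.support, β.coeff w * (starRingEnd ℂ) (β.coeff w) := by
        rw [Finset.mul_sum]
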